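/- Let T ⊆ 2^{<ω} be a uniform perfect tree and let 𝔸_{𝕍,T} be the partial order of finite uniform subtrees of T, where s ≤ t iff height(s) ≥ height(t) and s restricted to height(t) equals t. If D is an open dense subset of Cohen forcing 2^{<ω}, then D_T = {t ∈ 𝔸_{𝕍,T} : Term(Θ_T(t)) ⊆ D} is dense in 𝔸_{𝕍,T}, where Θ_T is the canonical isomorphism between the splitting points of T and 2^{<ω}. -/

import Mathlib

def IsTree (T : Set (List Bool)) : Prop :=
  ∀ ⦃l m : List Bool⦄, l <+: m → m ∈ T → l ∈ T

def SplitsAt (T : Set (List Bool)) (l : List Bool) : Prop :=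
  l ++ [false] ∈ T ∧ l ++ [true] ∈ T

def PerfectTree (T : Set (List Bool)) : Prop :=
  T.Nonempty ∧ IsTree T ∧ ∀ l ∈ T, ∃ m ∈ T, l <+: m ∧ SplitsAt T m

def splitNodes (T : Set (List Bool)) : Set (List Bool) :=
  {l | l ∈ T ∧ SplitsAt T l}

/-- A set of binary sequences is uniform if nodes of equal length have the same
immediate successor directions in it. -/
def UniformIn (T : Set (List Bool)) : Prop :=
  ∀ l ∈ T, ∀ m ∈ T, l.length = m.length → ∀ b : Bool, (l ++ [b] ∈ T ↔ m ++ [b] ∈ T)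

/-- A uniform (Silver) tree: a uniform perfect tree. -/
def UniformTree (T : Set (List Bool)) : Prop :=
  PerfectTree T ∧ UniformIn T

noncomputable def height (t : Set (List Bool)) : ℕ :=
  sSup (List.length '' t)

/-- A condition of the auxiliary Silver forcing `𝔸_{𝕍,T}`: a finite nonempty
uniform subtree of `T`, all of whose maximal branches have the same height. -/
def SilverAuxCond (T : Set (List Bool)) (t : Set (List Bool)) : Prop :=
  t ⊆ T ∧ t.Finite ∧ t.Nonempty ∧ IsTree t ∧ UniformIn t ∧
    ∀ p ∈ t, ∀ q ∈ t, (∀ r ∈ t, p <+: r → r = p) → (∀ r ∈ t, q <+: r → r = q) →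
      p.length = q.length

/-- The order of `𝔸_{𝕍,T}`: `s ≤ t` iff `height s ≥ height t` and the restriction
of `s` to the height of `t` equals `t`. -/
def SilverLe (s t : Set (List Bool)) : Prop :=
  height t ≤ height s ∧ {l | l ∈ s ∧ l.length ≤ height t} = t

/-- The maximal splitting nodes (of `T`) belonging to `t`; their `Θ_T`-images are
the terminal nodes of the image tree `Θ_T(t)`. -/
def MaxSplit (T t : Set (List Bool)) : Set (List Bool) :=
  {p | p ∈ t ∧ p ∈ splitNodes T ∧
    ∀ q ∈ t, q ∈ splitNodes T → p <+: q → q = p}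

section Aux

variable {T t s u : Set (List Bool)}

lemma prefix_eq_of_length {d e c : List Bool} (hd : d <+: c) (he : e <+: c)
    (hlen : d.length = e.length) : d = e := by
  have h1 : c.take d.length = d := (List.prefix_iff_eq_take.mp hd).symm
  have h2 : c.take e.length = e := (List.prefix_iff_eq_take.mp he).symm
  rw [← h1, ← h2, hlen]

lemma uniform_transfer (hT : UniformTree T) :
    ∀ (c : List Bool) {l m : List Bool}, l ∈ T → m ∈ T → l.length = m.length →
      l ++ c ∈ T → m ++ c ∈ T := by
  intro c
  induction c using List.reverseRecOn with
  | nil => intro l m _ hm _ _; simpa using hm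
  | append_singleton d b ih =>
    intro l m hl hm hlen h
    rw [← List.append_assoc] at h ⊢
    have hld : l ++ d ∈ T := hT.1.2.1 (List.prefix_append _ _) h
    have hmd : m ++ d ∈ T := ih hl hm hlen hld
    exact (hT.2 (l ++ d) hld (m ++ d) hmd (by simp [hlen]) b).mp h

lemma height_eq {n : ℕ} (h1 : ∃ l ∈ t, l.length = n)
    (h2 : ∀ l ∈ t, l.length ≤ n) : height t = n := by
  obtain ⟨l, hl, hln⟩ := h1
  refine le_antisymm (csSup_le ⟨l.length, ⟨l, hl, rfl⟩⟩ ?_) ?_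
  · rintro x ⟨m, hm, rfl⟩; exact h2 m hm
  · rw [← hln]
    exact le_csSup ⟨n, by rintro x ⟨m, hm, rfl⟩; exact h2 m hm⟩ ⟨l, hl, rfl⟩

lemma len_le_height (hf : t.Finite) {p : List Bool} (hp : p ∈ t) :
    p.length ≤ height t :=
  le_csSup ((hf.image _).bddAbove) ⟨p, hp, rfl⟩

lemma exists_top (hf : t.Finite) (hn : t.Nonempty) :
    ∃ r ∈ t, r.length = height t := by
  obtain ⟨r, hr, h⟩ := (hn.image List.length).csSup_mem (hf.image _)
  exact ⟨r, hr, h⟩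

lemma terminal_length (ht : SilverAuxCond T t) {p : List Bool} (hp : p ∈ t)
    (hmax : ∀ r ∈ t, p <+: r → r = p) : p.length = height t := by
  obtain ⟨_, hf, hn, _, _, heq⟩ := ht
  obtain ⟨r0, hr0, hr0l⟩ := exists_top hf hn
  have hr0max : ∀ r ∈ t, r0 <+: r → r = r0 := fun r hr hpre =>
    (hpre.eq_of_length_le (by rw [hr0l]; exact len_le_height hf hr)).symm
  rw [heq p hp r0 hr0 hmax hr0max, hr0l]

lemma exists_maximal_above (hf : t.Finite) {p : List Bool} (hp : p ∈ t) :
    ∃ m ∈ t, p <+: m ∧ ∀ r ∈ t, m <+: r → r = m := by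
  have hs : {r | r ∈ t ∧ p <+: r}.Finite := hf.subset (fun r hr => hr.1)
  obtain ⟨m, ⟨hm, hmax⟩⟩ := Set.Finite.exists_maximalFor List.length _ hs ⟨p, hp, List.prefix_refl p⟩
  refine ⟨m, hm.1, hm.2, fun r hr hpre => ?_⟩
  have hr' : r ∈ {r | r ∈ t ∧ p <+: r} := ⟨hr, hm.2.trans hpre⟩
  exact (hpre.eq_of_length_le (hmax hr' hpre.length_le)).symm

lemma silverLe_refl (hf : t.Finite) : SilverLe t t :=
  ⟨le_rfl, Set.ext fun l => ⟨fun h => h.1, fun h => ⟨h, len_le_height hf h⟩⟩⟩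

lemma silverLe_trans (h1 : SilverLe u s) (h2 : SilverLe s t) : SilverLe u t := by
  refine ⟨h2.1.trans h1.1, Set.ext fun l => ?_⟩
  have hs : ∀ x : List Bool, x ∈ s ↔ x ∈ u ∧ x.length ≤ height s :=
    fun x => (Set.ext_iff.mp h1.2 x).symm
  have ht : ∀ x : List Bool, x ∈ t ↔ x ∈ s ∧ x.length ≤ height t :=
    fun x => (Set.ext_iff.mp h2.2 x).symm
  simp only [Set.mem_setOf_eq, ht, hs]
  constructor
  · rintro ⟨hu, hl⟩; exact ⟨⟨hu, hl.trans h2.1⟩, hl⟩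
  · rintro ⟨⟨hu, _⟩, hl⟩; exact ⟨hu, hl⟩

/-- The canonical uniform extension of a condition `t` by a tail `c`. -/
def extendCond (t : Set (List Bool)) (c : List Bool) : Set (List Bool) :=
  {l | l.length ≤ height t + c.length ∧ l.take (height t) ∈ t ∧ l.drop (height t) <+: c}

lemma mem_extendCond_of_mem (hf : t.Finite) {c l : List Bool} (hl : l ∈ t) :
    l ∈ extendCond t c := by
  have hlen := len_le_height hf hl
  refine ⟨hlen.trans (Nat.le_add_right _ _), ?_, ?_⟩
  · rw [List.take_of_length_le hlen]; exact hl
  · rw [List.drop_eq_nil_of_le hlen]; exact List.nil_prefix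

lemma mem_of_mem_extendCond {c l : List Bool} (hl : l ∈ extendCond t c)
    (hlen : l.length ≤ height t) : l ∈ t := by
  have := hl.2.1
  rwa [List.take_of_length_le hlen] at this

lemma extendCond_top {c l : List Bool} (hf : t.Finite) :
    (l ∈ extendCond t c ∧ l.length = height t + c.length) ↔
      ∃ p ∈ t, p.length = height t ∧ l = p ++ c := by
  constructor
  · rintro ⟨⟨_, htake, hdrop⟩, hlen⟩
    refine ⟨l.take (height t), htake, ?_, ?_⟩
    · rw [List.length_take]; omega
    · have hdl : (l.drop (height t)).length = c.length := by
        rw [List.length_drop]; omega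
      have : l.drop (height t) = c := hdrop.eq_of_length hdl
      conv_lhs => rw [← List.take_append_drop (height t) l, this]
  · rintro ⟨p, hp, hpl, rfl⟩
    have h1 : (p ++ c).take (height t) = p := by
      rw [← hpl]; exact List.take_left
    have h2 : (p ++ c).drop (height t) = c := by
      rw [← hpl]; exact List.drop_left
    exact ⟨⟨by simp [hpl], by rw [h1]; exact hp, by rw [h2]⟩, by simp [hpl]⟩

lemma extend_spec (hT : UniformTree T) (ht : SilverAuxCond T t)
    {c r0 : List Bool} (hr0 : r0 ∈ t) (hr0l : r0.length = height t)
    (hrc : r0 ++ c ∈ T) :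
    SilverAuxCond T (extendCond t c) ∧ SilverLe (extendCond t c) t ∧
      height (extendCond t c) = height t + c.length := by
  obtain ⟨hsub, hf, hn, htree, hunif, hterm⟩ := ht
  have ht' : SilverAuxCond T t := ⟨hsub, hf, hn, htree, hunif, hterm⟩
  -- membership in `T`
  have hsubT : extendCond t c ⊆ T := by
    intro l hl
    rcases le_or_gt l.length (height t) with hle | hgt
    · exact hsub (mem_of_mem_extendCond hl hle)
    · have htl : (l.take (height t)).length = (height t) := by rw [List.length_take]; omega
      have h1 : r0 ++ l.drop (height t) ∈ T := by
        refine hT.1.2.1 ?_ hrc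
        obtain ⟨e, he⟩ := hl.2.2
        exact ⟨e, by rw [List.append_assoc, he]⟩
      have h2 : l.take (height t) ++ l.drop (height t) ∈ T :=
        uniform_transfer hT (l.drop (height t)) (hsub hr0) (hsub hl.2.1) (by rw [hr0l, htl]) h1
      rwa [List.take_append_drop] at h2
  -- finiteness
  have hfin : (extendCond t c).Finite :=
    (List.finite_length_le Bool ((height t) + c.length)).subset (fun l hl => hl.1)
  -- height
  have hrc_mem : r0 ++ c ∈ extendCond t c :=
    ((extendCond_top hf).mpr ⟨r0, hr0, hr0l, rfl⟩).1
  have hht : height (extendCond t c) = (height t) + c.length :=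
    height_eq ⟨r0 ++ c, hrc_mem, by simp [hr0l]⟩ (fun l hl => hl.1)
  -- tree
  have htree' : IsTree (extendCond t c) := by
    intro l m hpre hm
    exact ⟨hpre.length_le.trans hm.1, htree (hpre.take (height t)) hm.2.1,
      (hpre.drop (height t)).trans hm.2.2⟩
  -- maximal elements have full length
  have hmaxlen : ∀ p ∈ extendCond t c,
      (∀ r ∈ extendCond t c, p <+: r → r = p) → p.length = (height t) + c.length := by
    intro p hp hmax
    by_contra hne
    have hplt : p.length < (height t) + c.length := lt_of_le_of_ne hp.1 hne
    rcases lt_or_ge p.length (height t) with hlt | hge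
    · -- p ∈ t, not maximal in t
      have hpt : p ∈ t := mem_of_mem_extendCond hp hlt.le
      have : ¬ (∀ r ∈ t, p <+: r → r = p) := by
        intro hmt
        exact absurd (terminal_length ht' hpt hmt) (by omega)
      push_neg at this
      obtain ⟨r, hr, hpr, hrp⟩ := this
      exact hrp (hmax r (mem_extendCond_of_mem hf hr) hpr)
    · -- can extend by the next bit of c
      have hidx : p.length - (height t) < c.length := by omega
      set b := c.get ⟨p.length - (height t), hidx⟩ with hb
      have hdl : (p.drop (height t)).length = p.length - (height t) := List.length_drop
      have hdrop : p.drop (height t) = c.take (p.length - (height t)) := by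
        have := List.prefix_iff_eq_take.mp hp.2.2
        rw [this, hdl]
      have hq : p ++ [b] ∈ extendCond t c := by
        refine ⟨?_, ?_, ?_⟩
        · simp only [List.length_append, List.length_singleton]; omega
        · rw [List.take_append_of_le_length hge]; exact hp.2.1
        · rw [List.drop_append, Nat.sub_eq_zero_of_le hge,
            List.drop_zero, hdrop]
          have heq : c.take (p.length - (height t)) ++ [c.get ⟨p.length - (height t), hidx⟩]
              = c.take (p.length - (height t) + 1) := by
            rw [List.get_eq_getElem, ← List.concat_eq_append]
            exact List.take_concat_get hidx
          rw [hb, heq]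
          exact List.take_prefix _ c
      have := hmax _ hq (List.prefix_append p [b])
      simp at this
  -- uniformity
  have hunif' : UniformIn (extendCond t c) := by
    have key : ∀ l ∈ extendCond t c, ∀ m ∈ extendCond t c, l.length = m.length →
        ∀ b : Bool, l ++ [b] ∈ extendCond t c → m ++ [b] ∈ extendCond t c := by
      intro l hl m hm hlen b hlb
      rcases lt_or_ge l.length (height t) with hlt | hge
      · -- inside t
        have hlt' : l.length + 1 ≤ (height t) := hlt
        have hl' : l ∈ t := mem_of_mem_extendCond hl hlt.le
        have hm' : m ∈ t := mem_of_mem_extendCond hm (by omega)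
        have hlb' : l ++ [b] ∈ t := mem_of_mem_extendCond hlb (by simp; omega)
        have : m ++ [b] ∈ t := (hunif l hl' m hm' hlen b).mp hlb'
        exact mem_extendCond_of_mem hf this
      · -- above height t : drops are equal prefixes of c
        have hge' : (height t) ≤ m.length := by omega
        have hdeq : l.drop (height t) = m.drop (height t) :=
          prefix_eq_of_length hl.2.2 hm.2.2 (by simp [hlen])
        refine ⟨?_, ?_, ?_⟩
        · have := hlb.1
          simp only [List.length_append, List.length_singleton] at this ⊢
          omega
        · rw [List.take_append_of_le_length hge']; exact hm.2.1
        · have h1 : (l ++ [b]).drop (height t) = l.drop (height t) ++ [b] := by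
            rw [List.drop_append, Nat.sub_eq_zero_of_le hge, List.drop_zero]
          have h2 : (m ++ [b]).drop (height t) = m.drop (height t) ++ [b] := by
            rw [List.drop_append, Nat.sub_eq_zero_of_le hge', List.drop_zero]
          rw [h2, ← hdeq, ← h1]
          exact hlb.2.2
    intro l hl m hm hlen b
    exact ⟨key l hl m hm hlen b, key m hm l hl hlen.symm b⟩
  refine ⟨⟨hsubT, hfin, ⟨r0 ++ c, hrc_mem⟩, htree', hunif', ?_⟩, ⟨?_, ?_⟩, hht⟩
  · intro p hp q hq hpm hqm
    rw [hmaxlen p hp hpm, hmaxlen q hq hqm]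
  · rw [hht]; omega
  · ext l
    constructor
    · rintro ⟨hl, hlen⟩; exact mem_of_mem_extendCond hl hlen
    · intro hl; exact ⟨mem_extendCond_of_mem hf hl, len_le_height hf hl⟩

/-- Goodness: every top-level node is a splitting node of `T`. -/
def GoodCond (T t : Set (List Bool)) : Prop :=
  ∀ p ∈ t, p.length = height t → p ∈ splitNodes T

lemma maxSplit_eq (ht : SilverAuxCond T t) (hg : GoodCond T t) :
    MaxSplit T t = {p | p ∈ t ∧ p.length = height t} := by
  obtain ⟨hsub, hf, hn, htree, hunif, hterm⟩ := ht
  ext p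
  constructor
  · rintro ⟨hp, hps, hpmax⟩
    obtain ⟨m, hm, hpm, hmmax⟩ := exists_maximal_above hf hp
    have hml : m.length = height t :=
      terminal_length ⟨hsub, hf, hn, htree, hunif, hterm⟩ hm hmmax
    have : m = p := hpmax m hm (hg m hm hml) hpm
    exact ⟨hp, by rw [← this, hml]⟩
  · rintro ⟨hp, hpl⟩
    refine ⟨hp, hg p hp hpl, fun q hq _ hpq => ?_⟩
    exact (hpq.eq_of_length_le (by rw [hpl]; exact len_le_height hf hq)).symm

lemma extend_good (hT : UniformTree T) (ht : SilverAuxCond T t)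
    {c r0 : List Bool} (hr0 : r0 ∈ t) (hr0l : r0.length = height t)
    (hrc : r0 ++ c ∈ splitNodes T) : GoodCond T (extendCond t c) := by
  intro p hp hpl
  obtain ⟨hext, _, hht⟩ := extend_spec hT ht hr0 hr0l hrc.1
  rw [hht] at hpl
  obtain ⟨q, hq, hql, rfl⟩ := (extendCond_top ht.2.1).mp ⟨hp, hpl⟩
  refine ⟨hext.1 hp, ?_, ?_⟩
  · have := uniform_transfer hT (c ++ [false]) (ht.1 hr0) (ht.1 hq)
      (by rw [hr0l, hql]) (by rw [← List.append_assoc]; exact hrc.2.1)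
    rwa [← List.append_assoc] at this
  · have := uniform_transfer hT (c ++ [true]) (ht.1 hr0) (ht.1 hq)
      (by rw [hr0l, hql]) (by rw [← List.append_assoc]; exact hrc.2.2)
    rwa [← List.append_assoc] at this

end Aux

/-- Let `T` be a uniform perfect tree, `Θ` the canonical isomorphism between the
splitting points of `T` and `2^{<ω}`, and `D` an open dense subset of Cohen forcing.
Then `D_T = {t ∈ 𝔸_{𝕍,T} : Term(Θ_T(t)) ⊆ D}` is dense in `𝔸_{𝕍,T}`. -/
theorem silverAux_dense_from_cohen_open_dense (T : Set (List Bool)) (hT : UniformTree T)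
    (Θ : List Bool → List Bool)
    (hbij : Set.BijOn Θ (splitNodes T) Set.univ)
    (hord : ∀ a ∈ splitNodes T, ∀ b ∈ splitNodes T, (a <+: b ↔ Θ a <+: Θ b))
    (D : Set (List Bool))
    (hDdense : ∀ a : List Bool, ∃ b ∈ D, a <+: b)
    (hDopen : ∀ a ∈ D, ∀ b : List Bool, a <+: b → b ∈ D) :
    ∀ t, SilverAuxCond T t →
      ∃ t', SilverAuxCond T t' ∧ SilverLe t' t ∧ ∀ p ∈ MaxSplit T t', Θ p ∈ D := by
  classical
  intro t ht
  -- Step 1: extend `t` so that all top-level nodes are splitting nodes of `T`.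
  obtain ⟨r0, hr0, hr0l⟩ := exists_top ht.2.1 ht.2.2.1
  obtain ⟨m, hmT, hpre, hsplit⟩ := hT.1.2.2 r0 (ht.1 hr0)
  obtain ⟨c0, rfl⟩ := hpre
  obtain ⟨ht1, hle1, -⟩ := extend_spec hT ht hr0 hr0l hmT
  have hg1 : GoodCond T (extendCond t c0) := extend_good hT ht hr0 hr0l ⟨hmT, hsplit⟩
  -- Main induction on the number of bad top-level nodes.
  have key : ∀ n (s : Set (List Bool)), SilverAuxCond T s → GoodCond T s →
      {p | p ∈ s ∧ p.length = height s ∧ Θ p ∉ D}.ncard ≤ n →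
      ∃ t', SilverAuxCond T t' ∧ SilverLe t' s ∧ ∀ p ∈ MaxSplit T t', Θ p ∈ D := by
    intro n
    induction n with
    | zero =>
      intro s hs hgs hcard
      have hfbad : {p | p ∈ s ∧ p.length = height s ∧ Θ p ∉ D}.Finite :=
        hs.2.1.subset (fun p hp => hp.1)
      have hbad : {p | p ∈ s ∧ p.length = height s ∧ Θ p ∉ D} = ∅ :=
        (Set.ncard_eq_zero hfbad).mp (Nat.le_zero.mp hcard)
      refine ⟨s, hs, silverLe_refl hs.2.1, fun p hp => ?_⟩
      rw [maxSplit_eq hs hgs] at hp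
      by_contra hnd
      exact Set.eq_empty_iff_forall_notMem.mp hbad p ⟨hp.1, hp.2, hnd⟩
    | succ n ih =>
      intro s hs hgs hcard
      rcases Set.eq_empty_or_nonempty {p | p ∈ s ∧ p.length = height s ∧ Θ p ∉ D} with
        hbad | ⟨r, hrs, hrl, hrD⟩
      · refine ⟨s, hs, silverLe_refl hs.2.1, fun p hp => ?_⟩
        rw [maxSplit_eq hs hgs] at hp
        by_contra hnd
        exact Set.eq_empty_iff_forall_notMem.mp hbad p ⟨hp.1, hp.2, hnd⟩
      · -- `r` is a bad top-level node; it is a splitting node of `T`.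
        have hrsplit : r ∈ splitNodes T := hgs r hrs hrl
        obtain ⟨d, hdD, hdpre⟩ := hDdense (Θ r)
        obtain ⟨q, hq, hqd⟩ := hbij.2.2 (Set.mem_univ d)
        have hrq : r <+: q := (hord r hrsplit q hq).mpr (by rw [hqd]; exact hdpre)
        obtain ⟨c, rfl⟩ := hrq
        obtain ⟨hs2, hle2, hh2⟩ := extend_spec hT hs hrs hrl hq.1
        have hg2 : GoodCond T (extendCond s c) := extend_good hT hs hrs hrl hq
        -- the bad set shrinks
        have hfbad : {p | p ∈ s ∧ p.length = height s ∧ Θ p ∉ D}.Finite :=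
          hs.2.1.subset (fun p hp => hp.1)
        have hsubbad : {p | p ∈ extendCond s c ∧ p.length = height (extendCond s c) ∧ Θ p ∉ D}
            ⊆ (fun e => e ++ c) ''
              ({p | p ∈ s ∧ p.length = height s ∧ Θ p ∉ D} \ {r}) := by
          rintro p ⟨hp, hpl, hpD⟩
          have hpl' : p.length = height s + c.length := by rw [← hh2]; exact hpl
          obtain ⟨e, he, hel, rfl⟩ := (extendCond_top hs.2.1).mp ⟨hp, hpl'⟩
          have hecsplit : e ++ c ∈ splitNodes T := hg2 _ hp hpl
          refine ⟨e, ⟨⟨he, hel, fun heD => ?_⟩, fun hesing => ?_⟩, rfl⟩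
          · have hesplit : e ∈ splitNodes T := hgs e he hel
            exact hpD (hDopen _ heD _
              ((hord e hesplit _ hecsplit).mp (List.prefix_append e c)))
          · rw [Set.mem_singleton_iff] at hesing
            subst hesing
            exact hpD (by rw [hqd]; exact hdD)
        have hcard2 : {p | p ∈ extendCond s c ∧
            p.length = height (extendCond s c) ∧ Θ p ∉ D}.ncard ≤ n := by
          have h1 := Set.ncard_le_ncard hsubbad ((hfbad.diff (t := _)).image _)
          have h2 := Set.ncard_image_le (f := fun e => e ++ c) (hfbad.diff (t := {r}))
          have h3 := Set.ncard_diff_singleton_of_mem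
            (show r ∈ {p | p ∈ s ∧ p.length = height s ∧ Θ p ∉ D} from ⟨hrs, hrl, hrD⟩)
          omega
        obtain ⟨t', ht', hle', hgood'⟩ := ih (extendCond s c) hs2 hg2 hcard2
        exact ⟨t', ht', silverLe_trans hle' hle2, hgood'⟩
  obtain ⟨t', ht', hle', hgood'⟩ := key
    {p | p ∈ extendCond t c0 ∧ p.length = height (extendCond t c0) ∧ Θ p ∉ D}.ncard
    (extendCond t c0) ht1 hg1 le_rfl
  exact ⟨t', ht', silverLe_trans hle' hle1, hgood'⟩
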